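/- (1) For every C₄ > 0 there exists C₄' > 0, depending only on C₄ (and on L, s̄), such that |∂_k² f_1(x)| ≤ C₄'/‖x‖⁴ for k = 1,2 and all x with 0 < ‖x‖ ≤ C₄. (2) For every fixed β ∈ (0,1) there exists C₅(β) > 0 such that |∂_k² f_m(x)| ≤ C₅(β)/‖x‖⁴ for all m ≥ 1, k = 1,2, and all x with 0 < ‖x‖ ≤ √(12(1−β))/s̄. -/

import Mathlib

open Real Finset

noncomputable section

/-- `p_m(x) = (1/L) ∑_{ℓ=1}^L ∑_{j=1}^m (−1)^{j+1} (s_ℓ · x)^{2j}/(2j)!`. -/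
def pm (L : ℕ) (s : Fin L → ℤ × ℤ) (m : ℕ) (x y : ℝ) : ℝ :=
  (1 / L) * ∑ ℓ, ∑ j ∈ Finset.Icc 1 m,
    (-1 : ℝ) ^ (j + 1) * ((s ℓ).1 * x + (s ℓ).2 * y) ^ (2 * j) / (Nat.factorial (2 * j))

/-- `f_m = 1/p_m`. -/
def fm (L : ℕ) (s : Fin L → ℤ × ℤ) (m : ℕ) (x y : ℝ) : ℝ := 1 / pm L s m x y


def pmd (L : ℕ) (s : Fin L → ℤ × ℤ) (m : ℕ) (x y : ℝ) : ℝ :=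
  (1 / L) * ∑ ℓ, ((s ℓ).1 : ℝ) * ∑ j ∈ Finset.Icc 1 m,
    (-1 : ℝ) ^ (j + 1) * ((s ℓ).1 * x + (s ℓ).2 * y) ^ (2 * j - 1) / (Nat.factorial (2 * j - 1))

def pmdd (L : ℕ) (s : Fin L → ℤ × ℤ) (m : ℕ) (x y : ℝ) : ℝ :=
  (1 / L) * ∑ ℓ, ((s ℓ).1 : ℝ)^2 * ∑ j ∈ Finset.Icc 1 m,
    (-1 : ℝ) ^ (j + 1) * ((s ℓ).1 * x + (s ℓ).2 * y) ^ (2 * j - 2) / (Nat.factorial (2 * j - 2))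

lemma hasDerivAt_pm (L : ℕ) (s : Fin L → ℤ × ℤ) (m : ℕ) (y x : ℝ) :
    HasDerivAt (fun t => pm L s m t y) (pmd L s m x y) x := by
  unfold pm pmd
  apply HasDerivAt.const_mul
  apply HasDerivAt.fun_sum
  intro ℓ _
  rw [Finset.mul_sum]
  apply HasDerivAt.fun_sum
  intro j hj
  have hj1 : 1 ≤ j := (Finset.mem_Icc.mp hj).1
  have hlin : HasDerivAt (fun t : ℝ => ((s ℓ).1 : ℝ) * t + ((s ℓ).2 : ℝ) * y)
      ((s ℓ).1 : ℝ) x := by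
    simpa using ((hasDerivAt_id x).const_mul ((s ℓ).1 : ℝ)).add_const (((s ℓ).2 : ℝ) * y)
  have h := ((hlin.pow (2*j)).const_mul ((-1:ℝ)^(j+1))).div_const ((Nat.factorial (2*j) : ℝ))
  convert h using 1
  case e'_4 => rfl
  · rfl
  have hfeN : Nat.factorial (2*j) = (2*j) * Nat.factorial (2*j-1) := by
    conv_lhs => rw [show 2*j = (2*j-1)+1 by omega, Nat.factorial_succ]
    congr 1
    omega
  have hfe : (Nat.factorial (2*j) : ℝ) = ((2*j:ℕ):ℝ) * (Nat.factorial (2*j-1) : ℝ) := by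
    exact_mod_cast congrArg (Nat.cast (R := ℝ)) hfeN
  rw [hfe]
  have hfpos : (0:ℝ) < (Nat.factorial (2*j-1) : ℝ) := by positivity
  have hjpos : (0:ℝ) < ((2*j:ℕ):ℝ) := by
    have : 0 < 2*j := by omega
    exact_mod_cast this
  have gen : ∀ (A T F J C : ℝ), J ≠ 0 → F ≠ 0 → A * (C * T / F) = C * (J * T * A) / (J * F) := by
    intro A T F J C hJ hF; field_simp
  exact gen _ _ _ _ _ hjpos.ne' hfpos.ne'

lemma hasDerivAt_pmd (L : ℕ) (s : Fin L → ℤ × ℤ) (m : ℕ) (y x : ℝ) :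
    HasDerivAt (fun t => pmd L s m t y) (pmdd L s m x y) x := by
  unfold pmd pmdd
  apply HasDerivAt.const_mul
  apply HasDerivAt.fun_sum
  intro ℓ _
  rw [show ((s ℓ).1 : ℝ)^2 = ((s ℓ).1 : ℝ) * ((s ℓ).1 : ℝ) by ring, mul_assoc]
  apply HasDerivAt.const_mul
  rw [Finset.mul_sum]
  apply HasDerivAt.fun_sum
  intro j hj
  have hj1 : 1 ≤ j := (Finset.mem_Icc.mp hj).1
  have hlin : HasDerivAt (fun t : ℝ => ((s ℓ).1 : ℝ) * t + ((s ℓ).2 : ℝ) * y)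
      ((s ℓ).1 : ℝ) x := by
    simpa using ((hasDerivAt_id x).const_mul ((s ℓ).1 : ℝ)).add_const (((s ℓ).2 : ℝ) * y)
  have h := ((hlin.pow (2*j-1)).const_mul ((-1:ℝ)^(j+1))).div_const ((Nat.factorial (2*j-1) : ℝ))
  convert h using 1
  case e'_4 => rfl
  · rfl
  have hfeN : Nat.factorial (2*j-1) = (2*j-1) * Nat.factorial (2*j-2) := by
    conv_lhs => rw [show 2*j-1 = (2*j-2)+1 by omega, Nat.factorial_succ]
    congr 1
    omega
  have hfe : (Nat.factorial (2*j-1) : ℝ) = ((2*j-1:ℕ):ℝ) * (Nat.factorial (2*j-2) : ℝ) := by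
    exact_mod_cast congrArg (Nat.cast (R := ℝ)) hfeN
  rw [hfe]
  have hfpos : (0:ℝ) < (Nat.factorial (2*j-2) : ℝ) := by positivity
  have hjpos : (0:ℝ) < ((2*j-1:ℕ):ℝ) := by
    have : 0 < 2*j-1 := by omega
    exact_mod_cast this
  rw [show 2*j-1-1 = 2*j-2 by omega]
  have gen : ∀ (A T F J C : ℝ), J ≠ 0 → F ≠ 0 → A * (C * T / F) = C * (J * T * A) / (J * F) := by
    intro A T F J C hJ hF; field_simp
  exact gen _ _ _ _ _ hjpos.ne' hfpos.ne'


lemma geom_bound (m : ℕ) : ∑ j ∈ Finset.Icc 1 m, ((3:ℝ)/5)^j ≤ 3/2 - (3/2)*(3/5)^m := by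
  induction m with
  | zero => simp
  | succ n ih =>
    rw [Finset.sum_Icc_succ_top (by omega)]
    have : ((3:ℝ)/5)^(n+1) = (3/5)*(3/5)^n := by ring
    nlinarith [ih]

lemma fact_bound : ∀ j : ℕ, 1 ≤ j → (12:ℝ)^(j-1) / (Nat.factorial (2*j-2)) ≤ 30 * (3/5)^j := by
  have step : ∀ j : ℕ, 3 ≤ j → (12:ℝ)^(j-1) / (Nat.factorial (2*j-2)) ≤ 30 * (3/5)^j →
      (12:ℝ)^j / (Nat.factorial (2*j)) ≤ 30 * (3/5)^(j+1) := by
    intro j hj ih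
    have hf : (2*j) = (2*j-2) + 1 + 1 := by omega
    have hfe : (Nat.factorial (2*j) : ℝ) = ((2*j:ℕ):ℝ) * ((2*j-1:ℕ):ℝ) * Nat.factorial (2*j-2) := by
      rw [hf, Nat.factorial_succ, Nat.factorial_succ]
      have h1 : (2*j-2) + 1 + 1 = 2*j := by omega
      have h2 : (2*j-2) + 1 = 2*j-1 := by omega
      rw [h1, h2]; push_cast; ring
    have hP : (30:ℝ) ≤ ((2*j:ℕ):ℝ) * ((2*j-1:ℕ):ℝ) := by
      have h6 : (6:ℕ) ≤ 2*j := by omega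
      have h5 : (5:ℕ) ≤ 2*j-1 := by omega
      have := (Nat.cast_le (α := ℝ)).2 h6
      have := (Nat.cast_le (α := ℝ)).2 h5
      push_cast at *
      nlinarith
    have hpos : (0:ℝ) < Nat.factorial (2*j-2) := by positivity
    have h12 : (12:ℝ)^j = 12 * 12^(j-1) := by
      rw [← pow_succ']; congr 1; omega
    rw [hfe, h12]
    have hB : (0:ℝ) ≤ (12:ℝ)^(j-1) / (Nat.factorial (2*j-2)) := by positivity
    have hPpos : (0:ℝ) < ((2*j:ℕ):ℝ) * ((2*j-1:ℕ):ℝ) := by linarith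
    have key : 12 * (12:ℝ)^(j-1) / (((2*j:ℕ):ℝ) * ((2*j-1:ℕ):ℝ) * (Nat.factorial (2*j-2):ℝ))
        = (12 / (((2*j:ℕ):ℝ) * ((2*j-1:ℕ):ℝ))) * ((12:ℝ)^(j-1) / (Nat.factorial (2*j-2):ℝ)) := by
      field_simp
    rw [key]
    have hr : 12 / (((2*j:ℕ):ℝ) * ((2*j-1:ℕ):ℝ)) ≤ 3/5 := by
      rw [div_le_iff₀ hPpos]; linarith
    calc (12 / (((2*j:ℕ):ℝ) * ((2*j-1:ℕ):ℝ))) * ((12:ℝ)^(j-1) / (Nat.factorial (2*j-2):ℝ))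
        ≤ (3/5) * (30 * (3/5)^j) := by
          apply mul_le_mul hr ih hB (by norm_num)
      _ = 30 * (3/5)^(j+1) := by ring
  intro j hj
  induction j with
  | zero => omega
  | succ n ih =>
    rcases Nat.lt_or_ge n 3 with h | h
    · interval_cases n <;> norm_num [Nat.factorial]
    · have h3 : 3 ≤ n := h
      have := step n h3 (ih (by omega))
      have he : 2*(n+1)-2 = 2*n := by omega
      have he2 : (n+1)-1 = n := by omega
      rw [he, he2]
      exact this

lemma sumE_bound (m : ℕ) (t : ℝ) (ht : t^2 ≤ 12) :
    |∑ j ∈ Finset.Icc 1 m, (-1:ℝ)^(j+1) * t^(2*j-2) / (Nat.factorial (2*j-2))| ≤ 45 := by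
  calc |∑ j ∈ Finset.Icc 1 m, (-1:ℝ)^(j+1) * t^(2*j-2) / (Nat.factorial (2*j-2))|
      ≤ ∑ j ∈ Finset.Icc 1 m, |(-1:ℝ)^(j+1) * t^(2*j-2) / (Nat.factorial (2*j-2))| :=
        Finset.abs_sum_le_sum_abs _ _
    _ ≤ ∑ j ∈ Finset.Icc 1 m, 30 * ((3:ℝ)/5)^j := by
        apply Finset.sum_le_sum
        intro j hj
        have hj1 : 1 ≤ j := (Finset.mem_Icc.mp hj).1
        have h1 : |(-1:ℝ)^(j+1) * t^(2*j-2) / (Nat.factorial (2*j-2))|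
            = |t|^(2*j-2) / (Nat.factorial (2*j-2)) := by
          rw [abs_div, abs_mul, abs_pow, abs_neg, abs_one, one_pow, one_mul, abs_pow,
            Nat.abs_cast]
        rw [h1]
        have h2 : |t|^(2*j-2) = (t^2)^(j-1) := by
          rw [← sq_abs, ← pow_mul]; congr 1; omega
        have h3 : (t^2)^(j-1) ≤ (12:ℝ)^(j-1) := pow_le_pow_left₀ (sq_nonneg t) ht _
        calc |t|^(2*j-2) / (Nat.factorial (2*j-2):ℝ) ≤ (12:ℝ)^(j-1) / (Nat.factorial (2*j-2):ℝ) := by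
              rw [h2]; gcongr
          _ ≤ 30 * (3/5)^j := fact_bound j hj1
    _ = 30 * ∑ j ∈ Finset.Icc 1 m, ((3:ℝ)/5)^j := by rw [Finset.mul_sum]
    _ ≤ 30 * (3/2) := by
        have := geom_bound m
        have h : (0:ℝ) ≤ (3/2)*(3/5)^m := by positivity
        nlinarith
    _ = 45 := by norm_num

lemma sumD_bound (m : ℕ) (t : ℝ) (ht : t^2 ≤ 12) :
    |∑ j ∈ Finset.Icc 1 m, (-1:ℝ)^(j+1) * t^(2*j-1) / (Nat.factorial (2*j-1))| ≤ 45 * |t| := by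
  calc |∑ j ∈ Finset.Icc 1 m, (-1:ℝ)^(j+1) * t^(2*j-1) / (Nat.factorial (2*j-1))|
      ≤ ∑ j ∈ Finset.Icc 1 m, |(-1:ℝ)^(j+1) * t^(2*j-1) / (Nat.factorial (2*j-1))| :=
        Finset.abs_sum_le_sum_abs _ _
    _ ≤ ∑ j ∈ Finset.Icc 1 m, |t| * (30 * ((3:ℝ)/5)^j) := by
        apply Finset.sum_le_sum
        intro j hj
        have hj1 : 1 ≤ j := (Finset.mem_Icc.mp hj).1
        have h1 : |(-1:ℝ)^(j+1) * t^(2*j-1) / (Nat.factorial (2*j-1))|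
            = |t|^(2*j-1) / (Nat.factorial (2*j-1)) := by
          rw [abs_div, abs_mul, abs_pow, abs_neg, abs_one, one_pow, one_mul, abs_pow,
            Nat.abs_cast]
        rw [h1]
        have h2 : |t|^(2*j-1) = |t| * (t^2)^(j-1) := by
          rw [← sq_abs, ← pow_mul]
          have : 2*j-1 = 1 + 2*(j-1) := by omega
          rw [this, pow_add, pow_one]
        have hfle : (Nat.factorial (2*j-2):ℝ) ≤ (Nat.factorial (2*j-1):ℝ) := by
          exact_mod_cast Nat.factorial_le (by omega)
        have hfpos : (0:ℝ) < (Nat.factorial (2*j-2):ℝ) := by positivity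
        calc |t|^(2*j-1) / (Nat.factorial (2*j-1):ℝ)
            ≤ (|t| * (12:ℝ)^(j-1)) / (Nat.factorial (2*j-2):ℝ) := by
              rw [h2]
              apply div_le_div₀ (by positivity) _ hfpos hfle
              have h3 : (t^2)^(j-1) ≤ (12:ℝ)^(j-1) := pow_le_pow_left₀ (sq_nonneg t) ht _
              exact mul_le_mul_of_nonneg_left h3 (abs_nonneg t)
          _ = |t| * ((12:ℝ)^(j-1) / (Nat.factorial (2*j-2):ℝ)) := by ring
          _ ≤ |t| * (30 * (3/5)^j) := by
              exact mul_le_mul_of_nonneg_left (fact_bound j hj1) (abs_nonneg t)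
    _ = |t| * (30 * ∑ j ∈ Finset.Icc 1 m, ((3:ℝ)/5)^j) := by
        rw [Finset.mul_sum, Finset.mul_sum]
    _ ≤ |t| * (30 * (3/2)) := by
        have := geom_bound m
        have h : (0:ℝ) ≤ (3/2)*(3/5)^m := by positivity
        have : (30:ℝ) * ∑ j ∈ Finset.Icc 1 m, ((3:ℝ)/5)^j ≤ 30 * (3/2) := by nlinarith
        exact mul_le_mul_of_nonneg_left this (abs_nonneg t)
    _ = 45 * |t| := by ring

-- S_m(t) = ∑_{j=1}^m (-1)^{j+1} t^{2j}/(2j)!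
lemma pair_step (t : ℝ) (ht : t^2 ≤ 12) : ∀ k : ℕ,
    ∑ j ∈ Finset.Icc 1 2, (-1:ℝ)^(j+1) * t^(2*j) / (Nat.factorial (2*j))
      ≤ ∑ j ∈ Finset.Icc 1 (2*k+2), (-1:ℝ)^(j+1) * t^(2*j) / (Nat.factorial (2*j)) := by
  intro k
  induction k with
  | zero => norm_num
  | succ n ih =>
    have he : 2*(n+1)+2 = (2*n+2) + 1 + 1 := by omega
    rw [he]
    rw [Finset.sum_Icc_succ_top (show 1 ≤ 2*n+2+1+1 by omega),
        Finset.sum_Icc_succ_top (show 1 ≤ 2*n+2+1 by omega)]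
    have hodd : ((-1:ℝ))^((2*n+2+1)+1) = 1 := by
      rw [show (2*n+2+1)+1 = 2*(n+2) by omega, pow_mul]; norm_num
    have heven : ((-1:ℝ))^((2*n+2+1+1)+1) = -1 := by
      rw [show (2*n+2+1+1)+1 = 2*(n+2)+1 by omega, pow_succ, pow_mul]; norm_num
    rw [hodd, heven]
    -- need: t^{2a}/(2a)! - t^{2a+2}/(2a+2)! ≥ 0 where a = 2n+3
    set a := 2*n+2+1 with ha
    have h1 : 2*(a+1) = 2*a + 1 + 1 := by omega
    have hfe : (Nat.factorial (2*(a+1)) : ℝ)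
        = ((2*a+2:ℕ):ℝ) * ((2*a+1:ℕ):ℝ) * Nat.factorial (2*a) := by
      rw [h1, Nat.factorial_succ, Nat.factorial_succ]
      push_cast; ring
    have hta : (0:ℝ) ≤ t^(2*a) := by
      rw [pow_mul]; positivity
    have htsplit : t^(2*(a+1)) = t^(2*a) * t^2 := by
      rw [show 2*(a+1) = 2*a + 2 by omega, pow_add]
    have hfpos : (0:ℝ) < Nat.factorial (2*a) := by positivity
    have hge : (12:ℝ) ≤ ((2*a+2:ℕ):ℝ) * ((2*a+1:ℕ):ℝ) := by
      have h6 : (6:ℝ) ≤ ((2*a+2:ℕ):ℝ) := by exact_mod_cast (show (6:ℕ) ≤ 2*a+2 by omega)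
      have h5 : (5:ℝ) ≤ ((2*a+1:ℕ):ℝ) := by exact_mod_cast (show (5:ℕ) ≤ 2*a+1 by omega)
      nlinarith
    have key : t^(2*(a+1)) / (Nat.factorial (2*(a+1)):ℝ) ≤ t^(2*a) / (Nat.factorial (2*a):ℝ) := by
      rw [hfe, htsplit]
      rw [div_le_div_iff₀ (by positivity) hfpos]
      have e1 : t^(2*a) * t^2 ≤ t^(2*a) * 12 := mul_le_mul_of_nonneg_left ht hta
      have e2 : t^(2*a) * 12 ≤ t^(2*a) * (((2*a+2:ℕ):ℝ) * ((2*a+1:ℕ):ℝ)) :=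
        mul_le_mul_of_nonneg_left hge hta
      have e3 := mul_le_mul_of_nonneg_right (e1.trans e2) hfpos.le
      calc t^(2*a) * t^2 * (Nat.factorial (2*a):ℝ)
          ≤ t^(2*a) * (((2*a+2:ℕ):ℝ) * ((2*a+1:ℕ):ℝ)) * (Nat.factorial (2*a):ℝ) := e3
        _ = t^(2*a) * (((2*a+2:ℕ):ℝ) * ((2*a+1:ℕ):ℝ) * (Nat.factorial (2*a):ℝ)) := by ring
    have h2a : (1:ℝ) * t^(2*a) / (Nat.factorial (2*a)) = t^(2*a)/(Nat.factorial (2*a)) := by ring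
    have h2b : (-1:ℝ) * t^(2*(a+1)) / (Nat.factorial (2*(a+1)))
        = -(t^(2*(a+1))/(Nat.factorial (2*(a+1)))) := by ring
    have : 2*(n+1+1) = a + 1 := by omega
    rw [this] at *
    linarith [ih, key, div_nonneg hta hfpos.le]

lemma sumS_lower (m : ℕ) (hm : 1 ≤ m) (t : ℝ) (ht : t^2 ≤ 12) :
    t^2/2 - t^4/24 ≤ ∑ j ∈ Finset.Icc 1 m, (-1:ℝ)^(j+1) * t^(2*j) / (Nat.factorial (2*j)) := by
  have hS1 : ∑ j ∈ Finset.Icc 1 1, (-1:ℝ)^(j+1) * t^(2*j) / (Nat.factorial (2*j)) = t^2/2 := by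
    norm_num [Nat.factorial]
  have hS2 : ∑ j ∈ Finset.Icc 1 2, (-1:ℝ)^(j+1) * t^(2*j) / (Nat.factorial (2*j))
      = t^2/2 - t^4/24 := by
    rw [show Finset.Icc 1 2 = {1, 2} by rfl]
    norm_num [Nat.factorial]
    ring
  rcases Nat.lt_or_ge m 2 with h | h
  · have : m = 1 := by omega
    rw [this, hS1]
    nlinarith [sq_nonneg (t^2)]
  · -- m ≥ 2 : m = 2k+2 or m = 2k+3
    rcases Nat.even_or_odd m with ⟨k, hk⟩ | ⟨k, hk⟩
    · have hk1 : 1 ≤ k := by omega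
      have : m = 2*(k-1)+2 := by omega
      rw [this, ← hS2]
      exact pair_step t ht (k-1)
    · have hk1 : 1 ≤ k := by omega
      have hmm : m = (2*(k-1)+2) + 1 := by omega
      rw [hmm, Finset.sum_Icc_succ_top (by omega), ← hS2]
      have hodd : ((-1:ℝ))^((2*(k-1)+2+1)+1) = 1 := by
        rw [show (2*(k-1)+2+1)+1 = 2*(k+1) by omega, pow_mul]; norm_num
      rw [hodd]
      have hta : (0:ℝ) ≤ t^(2*(2*(k-1)+2+1)) := by rw [pow_mul]; positivity
      have hfpos : (0:ℝ) < Nat.factorial (2*(2*(k-1)+2+1)) := by positivity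
      have := pair_step t ht (k-1)
      have hterm : (0:ℝ) ≤ 1 * t^(2*(2*(k-1)+2+1)) / (Nat.factorial (2*(2*(k-1)+2+1))) := by
        rw [one_mul]; exact div_nonneg hta hfpos.le
      linarith

lemma bound_f2 (P Pd Pdd c d e r : ℝ) (hr : 0 < r) (hc : 0 < c) (hd : 0 ≤ d) (he : 0 ≤ e)
    (hP : c * r^2 ≤ P) (hPd : |Pd| ≤ d * r) (hPdd : |Pdd| ≤ e) :
    |(-(Pdd) * P + 2 * Pd^2) / P^3| ≤ (e/c^2 + 2*d^2/c^3) / r^4 := by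
  have hPpos : 0 < P := lt_of_lt_of_le (by positivity) hP
  rw [abs_div, abs_of_pos (by positivity : (0:ℝ) < P^3)]
  have hnum : |(-(Pdd) * P + 2 * Pd^2)| ≤ e * P + 2 * (d*r)^2 := by
    calc |(-(Pdd) * P + 2 * Pd^2)| ≤ |(-(Pdd)) * P| + |2 * Pd^2| := abs_add_le _ _
      _ = |Pdd| * P + 2 * Pd^2 := by
          rw [abs_mul, abs_neg, abs_of_pos hPpos, abs_mul, abs_of_nonneg (by norm_num : (0:ℝ) ≤ 2),
            abs_of_nonneg (sq_nonneg Pd)]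
      _ ≤ e * P + 2 * (d*r)^2 := by
          have h1 : |Pdd| * P ≤ e * P := mul_le_mul_of_nonneg_right hPdd hPpos.le
          have h2 : Pd^2 ≤ (d*r)^2 := by
            rw [← sq_abs Pd]
            apply pow_le_pow_left₀ (abs_nonneg _) hPd
          linarith
  calc |(-(Pdd) * P + 2 * Pd^2)| / P^3 ≤ (e * P + 2 * (d*r)^2) / P^3 := by gcongr
    _ = e / P^2 + 2 * (d*r)^2 / P^3 := by field_simp
    _ ≤ e / (c*r^2)^2 + 2 * (d*r)^2 / (c*r^2)^3 := by gcongr <;> positivity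
    _ = (e/c^2 + 2*d^2/c^3) / r^4 := by field_simp

lemma iteratedDeriv_two_inv (P Pd Pdd : ℝ → ℝ)
    (hP : ∀ x, HasDerivAt P (Pd x) x) (hPd : ∀ x, HasDerivAt Pd (Pdd x) x)
    (x : ℝ) (hx : P x ≠ 0) :
    iteratedDeriv 2 (fun t => 1 / P t) x
      = (-(Pdd x) * P x + 2 * (Pd x)^2) / (P x)^3 := by
  have hcont : Continuous P := by
    rw [continuous_iff_continuousAt]; exact fun y => (hP y).continuousAt
  have hU : ∀ᶠ y in nhds x, P y ≠ 0 := hcont.continuousAt.eventually_ne hx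
  have hderiv : ∀ᶠ y in nhds x, deriv (fun t => 1 / P t) y = -(Pd y) / (P y)^2 := by
    filter_upwards [hU] with y hy
    have h := ((hasDerivAt_const y (1:ℝ)).div (hP y) hy)
    rw [show (fun t => 1 / P t) = (fun x => (1:ℝ)) / P from rfl, h.deriv]
    field_simp
    ring
  have heq : deriv (fun t => 1 / P t) =ᶠ[nhds x] fun y => -(Pd y) / (P y)^2 := hderiv
  rw [show (2:ℕ) = 1 + 1 from rfl, iteratedDeriv_succ, iteratedDeriv_one]
  rw [heq.deriv_eq]
  have hden : (P x)^2 ≠ 0 := pow_ne_zero _ hx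
  have h2 : HasDerivAt (fun y => -(Pd y) / (P y)^2)
      ((-(Pdd x) * (P x)^2 - (-(Pd x)) * (2 * P x ^ 1 * Pd x)) / ((P x)^2)^2) x := by
    exact ((hPd x).neg).div (((hP x).pow 2)) hden
  rw [h2.deriv]
  field_simp
  ring

lemma main_x (L : ℕ) (s : Fin L → ℤ × ℤ) (m : ℕ) (c d e : ℝ)
    (hc : 0 < c) (hd : 0 ≤ d) (he : 0 ≤ e) (x y : ℝ) (hr : 0 < Real.sqrt (x^2+y^2))
    (hP : c * (Real.sqrt (x^2+y^2))^2 ≤ pm L s m x y)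
    (hD : |pmd L s m x y| ≤ d * Real.sqrt (x^2+y^2))
    (hE : |pmdd L s m x y| ≤ e) :
    |iteratedDeriv 2 (fun t => fm L s m t y) x| ≤ (e/c^2 + 2*d^2/c^3) / (Real.sqrt (x^2+y^2))^4 := by
  have hne : pm L s m x y ≠ 0 := (lt_of_lt_of_le (by positivity) hP).ne'
  have hkey := iteratedDeriv_two_inv (fun t => pm L s m t y) (fun t => pmd L s m t y)
    (fun t => pmdd L s m t y) (fun t => hasDerivAt_pm L s m y t)
    (fun t => hasDerivAt_pmd L s m y t) x hne
  have hfm : (fun t => fm L s m t y) = fun t => 1 / pm L s m t y := rfl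
  rw [hfm, hkey]
  exact bound_f2 _ _ _ c d e _ hr hc hd he hP hD hE

lemma sum_abs_le (L : ℕ) (hL0 : 0 < L) (f : Fin L → ℝ) (K : ℝ)
    (hf : ∀ ℓ, |f ℓ| ≤ K) : |(1/(L:ℝ)) * ∑ ℓ, f ℓ| ≤ K := by
  have hK : 0 ≤ K := le_trans (abs_nonneg _) (hf ⟨0, hL0⟩)
  have h1 : |∑ ℓ, f ℓ| ≤ (L:ℝ) * K := by
    calc |∑ ℓ, f ℓ| ≤ ∑ ℓ, |f ℓ| := Finset.abs_sum_le_sum_abs _ _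
      _ ≤ ∑ _ℓ : Fin L, K := Finset.sum_le_sum fun ℓ _ => hf ℓ
      _ = (L:ℝ) * K := by rw [Finset.sum_const, Finset.card_univ, Fintype.card_fin,
            nsmul_eq_mul]
  have hLpos : (0:ℝ) < L := by exact_mod_cast hL0
  rw [abs_mul, abs_of_pos (by positivity : (0:ℝ) < 1/(L:ℝ))]
  calc (1/(L:ℝ)) * |∑ ℓ, f ℓ| ≤ (1/(L:ℝ)) * ((L:ℝ) * K) := by
        exact mul_le_mul_of_nonneg_left h1 (by positivity)
    _ = K := by field_simp
  
lemma sum_ge_two {L : ℕ} (i0 i1 : Fin L) (hne : i0 ≠ i1) (g : Fin L → ℝ)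
    (hg : ∀ ℓ, 0 ≤ g ℓ) : g i0 + g i1 ≤ ∑ ℓ, g ℓ := by
  have h : ∑ ℓ ∈ ({i0, i1} : Finset (Fin L)), g ℓ = g i0 + g i1 := Finset.sum_pair hne
  rw [← h]
  exact Finset.sum_le_sum_of_subset_of_nonneg (Finset.subset_univ _) (fun ℓ _ _ => hg ℓ)

lemma pm_swap (L : ℕ) (s : Fin L → ℤ × ℤ) (m : ℕ) (u v : ℝ) :
    pm L (fun ℓ => ((s ℓ).2, (s ℓ).1)) m u v = pm L s m v u := by
  unfold pm
  congr 1
  apply Finset.sum_congr rfl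
  intro ℓ _
  apply Finset.sum_congr rfl
  intro j _
  have : ((s ℓ).2 : ℝ) * u + ((s ℓ).1 : ℝ) * v = ((s ℓ).1 : ℝ) * v + ((s ℓ).2 : ℝ) * u :=
    add_comm _ _
  simp only [this]

lemma fm_swap (L : ℕ) (s : Fin L → ℤ × ℤ) (m : ℕ) (x : ℝ) :
    (fun t => fm L s m x t) = fun t => fm L (fun ℓ => ((s ℓ).2, (s ℓ).1)) m t x := by
  funext t
  unfold fm
  rw [pm_swap]

-- part-2 core bounds, one direction
lemma bounds2 (L : ℕ) (hL0 : 0 < L) (s : Fin L → ℤ × ℤ) (sbar : ℝ) (hsb0 : 0 ≤ sbar)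
    (habs : ∀ ℓ, |((s ℓ).1 : ℝ)| ≤ sbar)
    (i0 i1 : Fin L) (hne : i0 ≠ i1) (h0 : s i0 = (1,0)) (h1 : s i1 = (0,1))
    (m : ℕ) (hm : 1 ≤ m) (β : ℝ) (hβ0 : 0 < β)
    (x y : ℝ) (hr : 0 < Real.sqrt (x^2+y^2))
    (ht12 : ∀ ℓ, (((s ℓ).1:ℝ)*x + ((s ℓ).2:ℝ)*y)^2 ≤ 12)
    (htb : ∀ ℓ, |((s ℓ).1:ℝ)*x + ((s ℓ).2:ℝ)*y| ≤ sbar * Real.sqrt (x^2+y^2))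
    (hx2 : x^2 ≤ 12*(1-β)) (hy2 : y^2 ≤ 12*(1-β)) :
    |iteratedDeriv 2 (fun t => fm L s m t y) x|
      ≤ ((45*sbar^2)/(β/(2*L))^2 + 2*(45*sbar^2)^2/(β/(2*L))^3)
          / (Real.sqrt (x^2+y^2))^4 := by
  set r := Real.sqrt (x^2+y^2) with hrdef
  have hLpos : (0:ℝ) < L := by exact_mod_cast hL0
  have hr2 : r^2 = x^2 + y^2 := Real.sq_sqrt (by positivity)
  apply main_x L s m (β/(2*L)) (45*sbar^2) (45*sbar^2) (by positivity) (by positivity)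
    (by positivity) x y hr
  · -- lower bound on pm
    have hpos : ∀ ℓ, 0 ≤ ∑ j ∈ Finset.Icc 1 m,
        (-1:ℝ)^(j+1) * (((s ℓ).1:ℝ)*x + ((s ℓ).2:ℝ)*y)^(2*j) / (Nat.factorial (2*j)) := by
      intro ℓ
      have h := sumS_lower m hm _ (ht12 ℓ)
      nlinarith [ht12 ℓ, sq_nonneg (((s ℓ).1:ℝ)*x + ((s ℓ).2:ℝ)*y)]
    have hi0 : β*x^2/2 ≤ ∑ j ∈ Finset.Icc 1 m,
        (-1:ℝ)^(j+1) * (((s i0).1:ℝ)*x + ((s i0).2:ℝ)*y)^(2*j) / (Nat.factorial (2*j)) := by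
      have hb : ((s i0).1:ℝ)*x + ((s i0).2:ℝ)*y = x := by rw [h0]; push_cast; ring
      rw [hb]
      have h := sumS_lower m hm x (by nlinarith)
      nlinarith [sq_nonneg x]
    have hi1 : β*y^2/2 ≤ ∑ j ∈ Finset.Icc 1 m,
        (-1:ℝ)^(j+1) * (((s i1).1:ℝ)*x + ((s i1).2:ℝ)*y)^(2*j) / (Nat.factorial (2*j)) := by
      have hb : ((s i1).1:ℝ)*x + ((s i1).2:ℝ)*y = y := by rw [h1]; push_cast; ring
      rw [hb]
      have h := sumS_lower m hm y (by nlinarith)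
      nlinarith [sq_nonneg y]
    have hsum := sum_ge_two i0 i1 hne _ hpos
    unfold pm
    rw [hr2]
    calc β/(2*L) * (x^2+y^2) = (1/(L:ℝ)) * (β*x^2/2 + β*y^2/2) := by field_simp
      _ ≤ (1/(L:ℝ)) * (∑ ℓ, ∑ j ∈ Finset.Icc 1 m,
            (-1:ℝ)^(j+1) * (((s ℓ).1:ℝ)*x + ((s ℓ).2:ℝ)*y)^(2*j) / (Nat.factorial (2*j))) := by
          apply mul_le_mul_of_nonneg_left _ (by positivity)
          calc β*x^2/2 + β*y^2/2 ≤ _ + _ := add_le_add hi0 hi1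
            _ ≤ _ := hsum
  · -- pmd bound
    unfold pmd
    have h : |(1/(L:ℝ)) * ∑ ℓ, ((s ℓ).1:ℝ) * ∑ j ∈ Finset.Icc 1 m,
        (-1:ℝ)^(j+1) * (((s ℓ).1:ℝ)*x + ((s ℓ).2:ℝ)*y)^(2*j-1) / (Nat.factorial (2*j-1))|
        ≤ sbar * (45 * (sbar * r)) := by
      apply sum_abs_le L hL0 _ _
      intro ℓ
      rw [abs_mul]
      have hD := sumD_bound m _ (ht12 ℓ)
      have hDb : |∑ j ∈ Finset.Icc 1 m,
          (-1:ℝ)^(j+1) * (((s ℓ).1:ℝ)*x + ((s ℓ).2:ℝ)*y)^(2*j-1) / (Nat.factorial (2*j-1))|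
          ≤ 45 * (sbar * r) := by
        calc _ ≤ 45 * |((s ℓ).1:ℝ)*x + ((s ℓ).2:ℝ)*y| := hD
          _ ≤ 45 * (sbar * r) := by
              exact mul_le_mul_of_nonneg_left (htb ℓ) (by norm_num)
      exact mul_le_mul (habs ℓ) hDb (abs_nonneg _) hsb0
    calc _ ≤ sbar * (45 * (sbar * r)) := h
      _ = 45*sbar^2 * r := by ring
  · -- pmdd bound
    unfold pmdd
    apply sum_abs_le L hL0 _ _
    intro ℓ
    rw [abs_mul]
    have hE := sumE_bound m _ (ht12 ℓ)
    have ha2 : |((s ℓ).1:ℝ)^2| ≤ sbar^2 := by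
      rw [abs_of_nonneg (sq_nonneg _), ← sq_abs]
      exact pow_le_pow_left₀ (abs_nonneg _) (habs ℓ) 2
    calc |((s ℓ).1:ℝ)^2| * |∑ j ∈ Finset.Icc 1 m,
          (-1:ℝ)^(j+1) * (((s ℓ).1:ℝ)*x + ((s ℓ).2:ℝ)*y)^(2*j-2) / (Nat.factorial (2*j-2))|
        ≤ sbar^2 * 45 := mul_le_mul ha2 hE (abs_nonneg _) (by positivity)
      _ = 45*sbar^2 := by ring

lemma S1eq (t : ℝ) : ∑ j ∈ Finset.Icc 1 1, (-1:ℝ)^(j+1) * t^(2*j) / (Nat.factorial (2*j))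
    = t^2/2 := by
  rw [Finset.Icc_self, Finset.sum_singleton]
  norm_num [Nat.factorial]

lemma D1eq (t : ℝ) : ∑ j ∈ Finset.Icc 1 1, (-1:ℝ)^(j+1) * t^(2*j-1) / (Nat.factorial (2*j-1))
    = t := by
  rw [Finset.Icc_self, Finset.sum_singleton]
  norm_num [Nat.factorial]

lemma E1eq (t : ℝ) : ∑ j ∈ Finset.Icc 1 1, (-1:ℝ)^(j+1) * t^(2*j-2) / (Nat.factorial (2*j-2))
    = 1 := by
  rw [Finset.Icc_self, Finset.sum_singleton]
  norm_num [Nat.factorial]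

-- part-1 core bounds, one direction (m = 1)
lemma bounds1 (L : ℕ) (hL0 : 0 < L) (s : Fin L → ℤ × ℤ) (sbar : ℝ) (hsb0 : 0 ≤ sbar)
    (habs : ∀ ℓ, |((s ℓ).1 : ℝ)| ≤ sbar)
    (i0 i1 : Fin L) (hne : i0 ≠ i1) (h0 : s i0 = (1,0)) (h1 : s i1 = (0,1))
    (x y : ℝ) (hr : 0 < Real.sqrt (x^2+y^2))
    (htb : ∀ ℓ, |((s ℓ).1:ℝ)*x + ((s ℓ).2:ℝ)*y| ≤ sbar * Real.sqrt (x^2+y^2)) :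
    |iteratedDeriv 2 (fun t => fm L s 1 t y) x|
      ≤ (sbar^2/(1/(2*(L:ℝ)))^2 + 2*(sbar^2)^2/(1/(2*(L:ℝ)))^3)
          / (Real.sqrt (x^2+y^2))^4 := by
  set r := Real.sqrt (x^2+y^2) with hrdef
  have hLpos : (0:ℝ) < L := by exact_mod_cast hL0
  have hr2 : r^2 = x^2 + y^2 := Real.sq_sqrt (by positivity)
  apply main_x L s 1 (1/(2*(L:ℝ))) (sbar^2) (sbar^2) (by positivity) (by positivity)
    (by positivity) x y hr
  · -- lower bound on pm
    have hpos : ∀ ℓ, 0 ≤ ∑ j ∈ Finset.Icc 1 1,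
        (-1:ℝ)^(j+1) * (((s ℓ).1:ℝ)*x + ((s ℓ).2:ℝ)*y)^(2*j) / (Nat.factorial (2*j)) := by
      intro ℓ
      rw [S1eq]
      positivity
    have hi0 : x^2/2 ≤ ∑ j ∈ Finset.Icc 1 1,
        (-1:ℝ)^(j+1) * (((s i0).1:ℝ)*x + ((s i0).2:ℝ)*y)^(2*j) / (Nat.factorial (2*j)) := by
      have hb : ((s i0).1:ℝ)*x + ((s i0).2:ℝ)*y = x := by rw [h0]; push_cast; ring
      rw [hb, S1eq]
    have hi1 : y^2/2 ≤ ∑ j ∈ Finset.Icc 1 1,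
        (-1:ℝ)^(j+1) * (((s i1).1:ℝ)*x + ((s i1).2:ℝ)*y)^(2*j) / (Nat.factorial (2*j)) := by
      have hb : ((s i1).1:ℝ)*x + ((s i1).2:ℝ)*y = y := by rw [h1]; push_cast; ring
      rw [hb, S1eq]
    have hsum := sum_ge_two i0 i1 hne _ hpos
    unfold pm
    rw [hr2]
    calc 1/(2*(L:ℝ)) * (x^2+y^2) = (1/(L:ℝ)) * (x^2/2 + y^2/2) := by
          rw [one_div, one_div, mul_inv]; ring
      _ ≤ (1/(L:ℝ)) * (∑ ℓ, ∑ j ∈ Finset.Icc 1 1,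
            (-1:ℝ)^(j+1) * (((s ℓ).1:ℝ)*x + ((s ℓ).2:ℝ)*y)^(2*j) / (Nat.factorial (2*j))) := by
          apply mul_le_mul_of_nonneg_left _ (by positivity)
          calc x^2/2 + y^2/2 ≤ _ + _ := add_le_add hi0 hi1
            _ ≤ _ := hsum
  · -- pmd bound
    unfold pmd
    have h : |(1/(L:ℝ)) * ∑ ℓ, ((s ℓ).1:ℝ) * ∑ j ∈ Finset.Icc 1 1,
        (-1:ℝ)^(j+1) * (((s ℓ).1:ℝ)*x + ((s ℓ).2:ℝ)*y)^(2*j-1) / (Nat.factorial (2*j-1))|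
        ≤ sbar * (sbar * r) := by
      apply sum_abs_le L hL0 _ _
      intro ℓ
      rw [abs_mul, D1eq]
      exact mul_le_mul (habs ℓ) (htb ℓ) (abs_nonneg _) hsb0
    calc _ ≤ sbar * (sbar * r) := h
      _ = sbar^2 * r := by ring
  · -- pmdd bound
    unfold pmdd
    apply sum_abs_le L hL0 _ _
    intro ℓ
    rw [abs_mul, E1eq, abs_one, mul_one, abs_of_nonneg (sq_nonneg _), ← sq_abs]
    exact pow_le_pow_left₀ (abs_nonneg _) (habs ℓ) 2

/-- (1) for every `C₄ > 0` there is `C₄' > 0` with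
`|∂_k² f_1(x)| ≤ C₄'/‖x‖⁴` for `0 < ‖x‖ ≤ C₄`; (2) for every `β ∈ (0,1)` there is
`C₅(β) > 0` with `|∂_k² f_m(x)| ≤ C₅(β)/‖x‖⁴` for all `m ≥ 1` and `0 < ‖x‖ ≤ √(12(1−β))/s̄`. -/
theorem second_partials_fm_bound (L : ℕ) (hL : 2 ≤ L) (s : Fin L → ℤ × ℤ)
    (hs : ∀ ℓ, s ℓ ≠ 0)
    (h1 : s ⟨0, by omega⟩ = (1, 0)) (h2 : s ⟨1, by omega⟩ = (0, 1))
    (sbar : ℝ)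
    (hsbar : IsGreatest (Set.range fun ℓ =>
      Real.sqrt (((s ℓ).1 : ℝ) ^ 2 + ((s ℓ).2 : ℝ) ^ 2)) sbar) :
    (∀ C₄ : ℝ, 0 < C₄ → ∃ C₄' : ℝ, 0 < C₄' ∧
      ∀ x y : ℝ, 0 < Real.sqrt (x ^ 2 + y ^ 2) → Real.sqrt (x ^ 2 + y ^ 2) ≤ C₄ →
        |iteratedDeriv 2 (fun t => fm L s 1 t y) x| ≤ C₄' / Real.sqrt (x ^ 2 + y ^ 2) ^ 4 ∧
        |iteratedDeriv 2 (fun t => fm L s 1 x t) y| ≤ C₄' / Real.sqrt (x ^ 2 + y ^ 2) ^ 4) ∧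
    (∀ β : ℝ, β ∈ Set.Ioo (0 : ℝ) 1 → ∃ C₅ : ℝ, 0 < C₅ ∧
      ∀ m : ℕ, 1 ≤ m → ∀ x y : ℝ, 0 < Real.sqrt (x ^ 2 + y ^ 2) →
        Real.sqrt (x ^ 2 + y ^ 2) ≤ Real.sqrt (12 * (1 - β)) / sbar →
        |iteratedDeriv 2 (fun t => fm L s m t y) x| ≤ C₅ / Real.sqrt (x ^ 2 + y ^ 2) ^ 4 ∧
        |iteratedDeriv 2 (fun t => fm L s m x t) y| ≤ C₅ / Real.sqrt (x ^ 2 + y ^ 2) ^ 4) := by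
  have hL0 : 0 < L := by omega
  set i0 : Fin L := ⟨0, by omega⟩ with hi0def
  set i1 : Fin L := ⟨1, by omega⟩ with hi1def
  have hne : i0 ≠ i1 := by simp [hi0def, hi1def, Fin.ext_iff]
  have hub : ∀ ℓ, Real.sqrt (((s ℓ).1 : ℝ)^2 + ((s ℓ).2 : ℝ)^2) ≤ sbar :=
    fun ℓ => hsbar.2 (Set.mem_range_self ℓ)
  have hsb1 : 1 ≤ sbar := by
    have := hub i0
    rw [h1] at this
    norm_num at this
    exact this
  have hsb0 : (0:ℝ) ≤ sbar := by linarith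
  have hsbpos : (0:ℝ) < sbar := by linarith
  have hsql : ∀ ℓ, ((s ℓ).1 : ℝ)^2 + ((s ℓ).2 : ℝ)^2 ≤ sbar^2 := by
    intro ℓ
    have h := hub ℓ
    have hnn : (0:ℝ) ≤ ((s ℓ).1 : ℝ)^2 + ((s ℓ).2 : ℝ)^2 := by positivity
    calc ((s ℓ).1 : ℝ)^2 + ((s ℓ).2 : ℝ)^2
        = (Real.sqrt (((s ℓ).1 : ℝ)^2 + ((s ℓ).2 : ℝ)^2))^2 := (Real.sq_sqrt hnn).symm
      _ ≤ sbar^2 := pow_le_pow_left₀ (Real.sqrt_nonneg _) h 2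
  have hCS2 : ∀ (a b u v : ℝ), a^2 + b^2 ≤ sbar^2 → |a*u + b*v| ≤ sbar * Real.sqrt (u^2+v^2) := by
    intro a b u v hab
    have h1' : (a*u+b*v)^2 ≤ sbar^2 * (u^2+v^2) := by nlinarith [sq_nonneg (a*v - b*u)]
    calc |a*u+b*v| = Real.sqrt ((a*u+b*v)^2) := (Real.sqrt_sq_eq_abs _).symm
      _ ≤ Real.sqrt (sbar^2 * (u^2+v^2)) := Real.sqrt_le_sqrt h1'
      _ = sbar * Real.sqrt (u^2+v^2) := by
          rw [Real.sqrt_mul (sq_nonneg _), Real.sqrt_sq hsb0]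
  have habs : ∀ ℓ, |((s ℓ).1 : ℝ)| ≤ sbar := by
    intro ℓ
    have := hCS2 ((s ℓ).1 : ℝ) ((s ℓ).2 : ℝ) 1 0 (hsql ℓ)
    norm_num at this
    exact this
  have habsB : ∀ ℓ, |((s ℓ).2 : ℝ)| ≤ sbar := by
    intro ℓ
    have := hCS2 ((s ℓ).1 : ℝ) ((s ℓ).2 : ℝ) 0 1 (hsql ℓ)
    norm_num at this
    exact this
  have hsqlB : ∀ ℓ, ((s ℓ).2 : ℝ)^2 + ((s ℓ).1 : ℝ)^2 ≤ sbar^2 := by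
    intro ℓ; have := hsql ℓ; linarith
  have hxy : ∀ u v : ℝ, Real.sqrt (v^2 + u^2) = Real.sqrt (u^2 + v^2) := by
    intro u v; rw [add_comm]
  constructor
  · -- Part 1
    intro C₄ _hC₄
    refine ⟨sbar^2/(1/(2*(L:ℝ)))^2 + 2*(sbar^2)^2/(1/(2*(L:ℝ)))^3, by positivity, ?_⟩
    intro x y hr _hle
    have hLpos : (0:ℝ) < (L:ℝ) := by exact_mod_cast hL0
    constructor
    · exact bounds1 L hL0 s sbar hsb0 habs i0 i1 hne h1 h2 x y hr
        (fun ℓ => hCS2 _ _ x y (hsql ℓ))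
    · rw [fm_swap]
      have hb := bounds1 L hL0 (fun ℓ => ((s ℓ).2, (s ℓ).1)) sbar hsb0 habsB i1 i0 hne.symm
        (by show ((s i1).2, (s i1).1) = (1,0); rw [h2]) 
        (by show ((s i0).2, (s i0).1) = (0,1); rw [h1]) y x (by rw [hxy]; exact hr)
        (fun ℓ => hCS2 ((s ℓ).2 : ℝ) ((s ℓ).1 : ℝ) y x (hsqlB ℓ))
      rw [hxy] at hb
      exact hb
  · -- Part 2
    intro β hβ
    obtain ⟨hβ0, hβ1⟩ := hβ
    refine ⟨(45*sbar^2)/(β/(2*(L:ℝ)))^2 + 2*(45*sbar^2)^2/(β/(2*(L:ℝ)))^3, ?_, ?_⟩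
    · have hLpos : (0:ℝ) < (L:ℝ) := by exact_mod_cast hL0
      positivity
    intro m hm x y hr hle
    set r := Real.sqrt (x^2+y^2) with hrdef
    have hr2 : r^2 = x^2 + y^2 := Real.sq_sqrt (by positivity)
    have h12nn : (0:ℝ) ≤ 12*(1-β) := by nlinarith
    have hsr : sbar * r ≤ Real.sqrt (12*(1-β)) := by
      rw [mul_comm]
      exact (le_div_iff₀ hsbpos).mp hle
    have hsr2 : (sbar*r)^2 ≤ 12*(1-β) := by
      calc (sbar*r)^2 ≤ (Real.sqrt (12*(1-β)))^2 :=
            pow_le_pow_left₀ (by positivity) hsr 2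
        _ = 12*(1-β) := Real.sq_sqrt h12nn
    have ht12 : ∀ ℓ, (((s ℓ).1:ℝ)*x + ((s ℓ).2:ℝ)*y)^2 ≤ 12 := by
      intro ℓ
      have h := hCS2 _ _ x y (hsql ℓ)
      have : (((s ℓ).1:ℝ)*x + ((s ℓ).2:ℝ)*y)^2 ≤ (sbar*r)^2 := by
        rw [← sq_abs]
        exact pow_le_pow_left₀ (abs_nonneg _) h 2
      nlinarith
    have ht12B : ∀ ℓ, (((s ℓ).2:ℝ)*y + ((s ℓ).1:ℝ)*x)^2 ≤ 12 := by
      intro ℓ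
      have h := hCS2 _ _ y x (hsqlB ℓ)
      rw [hxy] at h
      have : (((s ℓ).2:ℝ)*y + ((s ℓ).1:ℝ)*x)^2 ≤ (sbar*r)^2 := by
        rw [← sq_abs]
        exact pow_le_pow_left₀ (abs_nonneg _) h 2
      nlinarith
    have hrr : r^2 ≤ (sbar*r)^2 := by
      nlinarith [mul_nonneg (show (0:ℝ) ≤ sbar^2 - 1 by nlinarith) (sq_nonneg r)]
    have hx2 : x^2 ≤ 12*(1-β) := by nlinarith [sq_nonneg y]
    have hy2 : y^2 ≤ 12*(1-β) := by nlinarith [sq_nonneg x]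
    constructor
    · exact bounds2 L hL0 s sbar hsb0 habs i0 i1 hne h1 h2 m hm β hβ0 x y hr ht12
        (fun ℓ => hCS2 _ _ x y (hsql ℓ)) hx2 hy2
    · rw [fm_swap]
      have hb := bounds2 L hL0 (fun ℓ => ((s ℓ).2, (s ℓ).1)) sbar hsb0 habsB i1 i0 hne.symm
        (by show ((s i1).2, (s i1).1) = (1,0); rw [h2]) 
        (by show ((s i0).2, (s i0).1) = (0,1); rw [h1]) m hm β hβ0 y x
        (by rw [hxy]; exact hr) ht12B
        (fun ℓ => hCS2 ((s ℓ).2 : ℝ) ((s ℓ).1 : ℝ) y x (hsqlB ℓ)) hy2 hx2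
      rw [hxy] at hb
      exact hb


end
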